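/- Let F be a finite field, s ≥ 1, and f : F^s → B. Then f is reducible if and only if there exists a nonzero d ∈ F^s such that f(a·d + x) = f(x) for all a ∈ F and all x ∈ F^s. -/

import Mathlib

/-- A target function `f : A^s → B` is *reducible* if there exist `l < s`,
an `s × l` matrix `T` over `A`, and `g : A^l → B` with `g (x * T) = f x`. -/
def Reducible {A B : Type*} [Ring A] (s : ℕ) (f : (Fin s → A) → B) : Prop :=
  ∃ l : ℕ, l < s ∧ ∃ T : Matrix (Fin s) (Fin l) A, ∃ g : (Fin l → A) → B,
    ∀ x : Fin s → A, g (Matrix.vecMul x T) = f x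

/-- Over a finite field, `f : F^s → B` is reducible iff there is a nonzero
direction `d` such that `f` is invariant under translation by all multiples of `d`. -/
theorem reducible_iff_exists_invariant_direction (F B : Type*) [Field F] [Fintype F]
    (s : ℕ) (hs : 1 ≤ s) (f : (Fin s → F) → B) :
    Reducible s f ↔
      ∃ d : Fin s → F, d ≠ 0 ∧ ∀ (a : F) (x : Fin s → F), f (a • d + x) = f x := by
  constructor
  · rintro ⟨l, hl, T, g, hg⟩
    have hninj : ¬ Function.Injective (Matrix.vecMulLinear T : (Fin s → F) →ₗ[F] (Fin l → F)) := by
      intro h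
      have := LinearMap.finrank_le_finrank_of_injective h
      simp [Module.finrank_fin_fun] at this
      omega
    rw [Function.not_injective_iff] at hninj
    obtain ⟨x, y, hxy, hne⟩ := hninj
    refine ⟨x - y, sub_ne_zero.mpr hne, fun a z => ?_⟩
    have h0 : Matrix.vecMul (x - y) T = 0 := by
      have := map_sub (Matrix.vecMulLinear T) x y
      simp only [Matrix.vecMulLinear_apply] at this hxy
      rw [this, hxy, sub_self]
    have : Matrix.vecMul (a • (x - y) + z) T = Matrix.vecMul z T := by
      have h1 := map_add (Matrix.vecMulLinear T) (a • (x - y)) z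
      have h2 := map_smul (Matrix.vecMulLinear T) a (x - y)
      simp only [Matrix.vecMulLinear_apply] at h1 h2
      rw [h1, h2, h0, smul_zero, zero_add]
    rw [← hg, ← hg z, this]
  · rintro ⟨d, hd, hinv⟩
    obtain ⟨k, rfl⟩ : ∃ k, s = k + 1 := ⟨s - 1, by omega⟩
    obtain ⟨i, hi⟩ : ∃ i, d i ≠ 0 := by
      by_contra h; push_neg at h; exact hd (funext h)
    refine ⟨k, Nat.lt_succ_self k,
      (fun m j => (if m = i.succAbove j then 1 else 0) -
        (if m = i then d (i.succAbove j) / d i else 0)),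
      fun y => f (i.insertNth 0 y), fun x => ?_⟩
    have key : Matrix.vecMul x
        (fun m j => (if m = i.succAbove j then (1:F) else 0) -
          (if m = i then d (i.succAbove j) / d i else 0))
        = fun j => x (i.succAbove j) - x i / d i * d (i.succAbove j) := by
      funext j
      simp only [Matrix.vecMul, dotProduct, mul_sub, mul_ite, mul_one, mul_zero,
        Finset.sum_sub_distrib, Finset.sum_ite_eq', Finset.mem_univ, if_true]
      ring
    rw [key]
    have h1 : i.insertNth 0 (fun j => x (i.succAbove j) - x i / d i * d (i.succAbove j))
        = fun m => x m - x i / d i * d m := by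
      funext m
      refine Fin.succAboveCases i ?_ ?_ m
      · rw [Fin.insertNth_apply_same]
        field_simp
        ring
      · intro j
        rw [Fin.insertNth_apply_succAbove]
    beta_reduce
    rw [h1]
    have h2 : (fun m => x m - x i / d i * d m) = (-(x i / d i)) • d + x := by
      funext m
      simp [Pi.add_apply, Pi.smul_apply, smul_eq_mul]
      ring
    rw [h2, hinv]
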